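/- For integers 1 ≤ n_1 ≤ n_2 define P_{(n_1,n_2)}(t) = ∑_{i=1}^{n_1} i(t^{4i−2}+t^{4i−4}) + ∑_{i=2n_1}^{n_1+n_2−1} (2n_1+1)t^{2i} + ∑_{i=n_1+n_2}^{2n_1+n_2−1} 4(2n_1+n_2−i)t^{2i} + t^{4n_1+2n_2} ∈ ℤ[t], and extend by symmetry P_{(n_1,n_2)} := P_{(n_2,n_1)} when n_1 > n_2. Let f(T_1,T_2) denote the element of ℤ[t][[T_1,T_2]] given by (t²+1)T_1T_2·[(1−T_2)(1−T_1T_2)(1−t⁴T_1T_2)²]^{−1} + t⁴T_1T_2²(3−t⁴T_1T_2)·[(1−T_2)(1−t²T_2)(1−t⁴T_1T_2)²]^{−1} + 4t⁴T_1T_2·[(1−t²T_2)(1−t⁴T_1T_2)²(1−t⁶T_1T_2)]^{−1} + t⁶T_1T_2·[(1−t²T_2)(1−t⁶T_1T_2)]^{−1}, and let g(T_1,T_2) = (t²+1)T_1T_2·[(1−T_1T_2)(1−t⁴T_1T_2)²]^{−1} + 4t⁴T_1T_2·[(1−t⁴T_1T_2)²(1−t⁶T_1T_2)]^{−1} + t⁶T_1T_2·(1−t⁶T_1T_2)^{−1}.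 Then ∑_{n_1=1}^{∞} ∑_{n_2=1}^{∞} P_{(n_1,n_2)}(t)·T_1^{n_1}T_2^{n_2} = f(T_1,T_2) + f(T_2,T_1) − g(T_1,T_2). In particular, this double generating series is a rational function, i.e. it lies in ℤ(t, T_1, T_2). -/

import Mathlib

open Finset

/-- The Poincaré polynomial `P_{(n₁,n₂)}(t)` of the fundamental domain `F_γ` for `GL₃`
with root valuation `(n₁, n₂)`, `n₁ ≤ n₂`; it is extended by symmetry to all pairs in the
theorem below. -/
noncomputable def gl3PoincarePoly (n₁ n₂ : ℕ) : Polynomial ℤ :=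
  ∑ i ∈ Icc 1 n₁, (i : Polynomial ℤ) *
      (Polynomial.X ^ (4 * i - 2) + Polynomial.X ^ (4 * i - 4))
  + ∑ i ∈ Icc (2 * n₁) (n₁ + n₂ - 1),
      ((2 * n₁ + 1 : ℕ) : Polynomial ℤ) * Polynomial.X ^ (2 * i)
  + ∑ i ∈ Icc (n₁ + n₂) (2 * n₁ + n₂ - 1),
      ((4 * (2 * n₁ + n₂ - i) : ℕ) : Polynomial ℤ) * Polynomial.X ^ (2 * i)
  + Polynomial.X ^ (4 * n₁ + 2 * n₂)

/-- The constant `t`-polynomial viewed in `ℤ[t][[T₁, T₂]]`. -/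
noncomputable def gl3C (p : Polynomial ℤ) : MvPowerSeries (Fin 2) (Polynomial ℤ) :=
  MvPowerSeries.C (σ := Fin 2) (R := Polynomial ℤ) p

/-- `f(A, B) = (t²+1)AB/[(1−B)(1−AB)(1−t⁴AB)²] + t⁴AB²(3−t⁴AB)/[(1−B)(1−t²B)(1−t⁴AB)²]
  + 4t⁴AB/[(1−t²B)(1−t⁴AB)²(1−t⁶AB)] + t⁶AB/[(1−t²B)(1−t⁶AB)]`, the inverses being
`MvPowerSeries.invOfUnit _ 1`. -/
noncomputable def gl3F (A B : MvPowerSeries (Fin 2) (Polynomial ℤ)) :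
    MvPowerSeries (Fin 2) (Polynomial ℤ) :=
  gl3C (Polynomial.X ^ 2 + 1) * A * B *
      MvPowerSeries.invOfUnit
        ((1 - B) * (1 - A * B) * (1 - gl3C (Polynomial.X ^ 4) * A * B) ^ 2) 1
    + gl3C (Polynomial.X ^ 4) * A * B ^ 2 * (3 - gl3C (Polynomial.X ^ 4) * A * B) *
      MvPowerSeries.invOfUnit
        ((1 - B) * (1 - gl3C (Polynomial.X ^ 2) * B) *
          (1 - gl3C (Polynomial.X ^ 4) * A * B) ^ 2) 1
    + 4 * (gl3C (Polynomial.X ^ 4) * A * B) *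
      MvPowerSeries.invOfUnit
        ((1 - gl3C (Polynomial.X ^ 2) * B) * (1 - gl3C (Polynomial.X ^ 4) * A * B) ^ 2 *
          (1 - gl3C (Polynomial.X ^ 6) * A * B)) 1
    + gl3C (Polynomial.X ^ 6) * A * B *
      MvPowerSeries.invOfUnit
        ((1 - gl3C (Polynomial.X ^ 2) * B) * (1 - gl3C (Polynomial.X ^ 6) * A * B)) 1

/-- `g(A, B) = (t²+1)AB/[(1−AB)(1−t⁴AB)²] + 4t⁴AB/[(1−t⁴AB)²(1−t⁶AB)] + t⁶AB/(1−t⁶AB)`,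
the inverses being `MvPowerSeries.invOfUnit _ 1`. -/
noncomputable def gl3G (A B : MvPowerSeries (Fin 2) (Polynomial ℤ)) :
    MvPowerSeries (Fin 2) (Polynomial ℤ) :=
  gl3C (Polynomial.X ^ 2 + 1) * A * B *
      MvPowerSeries.invOfUnit
        ((1 - A * B) * (1 - gl3C (Polynomial.X ^ 4) * A * B) ^ 2) 1
    + 4 * (gl3C (Polynomial.X ^ 4) * A * B) *
      MvPowerSeries.invOfUnit
        ((1 - gl3C (Polynomial.X ^ 4) * A * B) ^ 2 *
          (1 - gl3C (Polynomial.X ^ 6) * A * B)) 1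
    + gl3C (Polynomial.X ^ 6) * A * B *
      MvPowerSeries.invOfUnit (1 - gl3C (Polynomial.X ^ 6) * A * B) 1

open Finset MvPowerSeries

abbrev Rt := Polynomial ℤ
abbrev PS := MvPowerSeries (Fin 2) Rt

def ser (F : ℕ → ℕ → Rt) : PS := fun d => F (d 0) (d 1)

lemma coeff_ser (F : ℕ → ℕ → Rt) (d : Fin 2 →₀ ℕ) :
    MvPowerSeries.coeff d (ser F) = F (d 0) (d 1) := rfl

noncomputable def mon (a b : ℕ) (c : Rt) : PS :=
  MvPowerSeries.monomial (σ := Fin 2) (Finsupp.single 0 a + Finsupp.single 1 b) c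

lemma pair_apply0 (a b : ℕ) : ((Finsupp.single 0 a + Finsupp.single 1 b : Fin 2 →₀ ℕ)) 0 = a := by simp
lemma pair_apply1 (a b : ℕ) : ((Finsupp.single 0 a + Finsupp.single 1 b : Fin 2 →₀ ℕ)) 1 = b := by simp

lemma pair_le (a b : ℕ) (d : Fin 2 →₀ ℕ) :
    (Finsupp.single 0 a + Finsupp.single 1 b) ≤ d ↔ a ≤ d 0 ∧ b ≤ d 1 := by
  rw [Finsupp.le_def]
  constructor
  · intro h
    exact ⟨by simpa [pair_apply0] using h 0, by simpa [pair_apply1] using h 1⟩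
  · rintro ⟨h0, h1⟩ i
    fin_cases i
    · simpa [pair_apply0] using h0
    · simpa [pair_apply1] using h1

lemma coeff_mon_mul_ser (a b : ℕ) (c : Rt) (F : ℕ → ℕ → Rt) (d : Fin 2 →₀ ℕ) :
    MvPowerSeries.coeff d (mon a b c * ser F) =
      if a ≤ d 0 ∧ b ≤ d 1 then c * F (d 0 - a) (d 1 - b) else 0 := by
  rw [mon, MvPowerSeries.coeff_monomial_mul]
  by_cases h : a ≤ d 0 ∧ b ≤ d 1
  · rw [if_pos ((pair_le a b d).2 h), if_pos h, coeff_ser]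
    congr 2
    · rw [Finsupp.tsub_apply, pair_apply0]
    · rw [Finsupp.tsub_apply, pair_apply1]
  · rw [if_neg (fun hh => h ((pair_le a b d).1 hh)), if_neg h]

lemma stepB (c : Rt) (F G : ℕ → ℕ → Rt)
    (h : ∀ m n : ℕ, F m n - (if 1 ≤ n then c * F m (n - 1) else 0) = G m n) :
    (1 - mon 0 1 c) * ser F = ser G := by
  ext d : 1
  rw [sub_mul, one_mul, map_sub, coeff_mon_mul_ser, coeff_ser, coeff_ser, ← h (d 0) (d 1)]
  congr 1
  by_cases hh : 1 ≤ d 1 <;> simp [hh]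

lemma stepA (c : Rt) (F G : ℕ → ℕ → Rt)
    (h : ∀ m n : ℕ, F m n - (if 1 ≤ m then c * F (m - 1) n else 0) = G m n) :
    (1 - mon 1 0 c) * ser F = ser G := by
  ext d : 1
  rw [sub_mul, one_mul, map_sub, coeff_mon_mul_ser, coeff_ser, coeff_ser, ← h (d 0) (d 1)]
  congr 1
  by_cases hh : 1 ≤ d 0 <;> simp [hh]

lemma stepAB (c : Rt) (F G : ℕ → ℕ → Rt)
    (h : ∀ m n : ℕ, F m n - (if 1 ≤ m ∧ 1 ≤ n then c * F (m - 1) (n - 1) else 0) = G m n) :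
    (1 - mon 1 1 c) * ser F = ser G := by
  ext d : 1
  rw [sub_mul, one_mul, map_sub, coeff_mon_mul_ser, coeff_ser, coeff_ser, ← h (d 0) (d 1)]

noncomputable def Sq (m : ℕ) : Rt := ∑ k ∈ range (m+1), ((k+1 : ℕ) : Rt) * Polynomial.X ^ (4*k)
noncomputable def sg (j : ℕ) : Rt := ∑ i ∈ range (j+1), Polynomial.X ^ (2*i)
noncomputable def Rr (m : ℕ) : Rt := ∑ b ∈ range (m+1), ((m+1-b : ℕ) : Rt) * Polynomial.X ^ (2*b)

lemma Sq_zero : Sq 0 = 1 := by simp [Sq]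
lemma sg_zero : sg 0 = 1 := by simp [sg]
lemma Rr_zero : Rr 0 = 1 := by simp [Rr]

lemma Sq_succ (m : ℕ) : Sq (m+1) = Sq m + ((m+2 : ℕ) : Rt) * Polynomial.X ^ (4*(m+1)) := by
  rw [Sq, Finset.sum_range_succ, ← Sq]

lemma sg_succ (j : ℕ) : sg (j+1) = sg j + Polynomial.X ^ (2*(j+1)) := by
  rw [sg, Finset.sum_range_succ, ← sg]

lemma Rr_succ (m : ℕ) : Rr (m+1) = Polynomial.X ^ 2 * Rr m + ((m+2 : ℕ) : Rt) := by
  rw [Rr, Finset.sum_range_succ', Rr, Finset.mul_sum]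
  congr 1
  · apply Finset.sum_congr rfl
    intro b _
    have h1 : m + 1 + 1 - (b + 1) = m + 1 - b := by omega
    rw [h1]
    ring
  · push_cast
    simp

noncomputable def fV1 (m n : ℕ) : Rt := if m ≤ n then Sq m else 0
noncomputable def fDS (m n : ℕ) : Rt := if m = n then Sq m else 0
noncomputable def fDm4 (m n : ℕ) : Rt := if m = n then ((m+1:ℕ):Rt) * Polynomial.X^(4*m) else 0
noncomputable def fD4g (m n : ℕ) : Rt := if m = n then Polynomial.X^(4*m) else 0
noncomputable def fV2 (m n : ℕ) : Rt :=
  if m ≤ n then ((m+1:ℕ):Rt) * Polynomial.X^(4*m) * sg (n-m) else 0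
noncomputable def fV2' (m n : ℕ) : Rt := if m ≤ n then ((m+1:ℕ):Rt) * Polynomial.X^(2*m+2*n) else 0
noncomputable def fV3 (m n : ℕ) : Rt := if m ≤ n then Polynomial.X^(2*m+2*n) * Rr m else 0
noncomputable def fDR (m n : ℕ) : Rt := if m = n then Polynomial.X^(4*m) * Rr m else 0
noncomputable def fV4 (m n : ℕ) : Rt := if m ≤ n then Polynomial.X^(4*m+2*n) else 0
noncomputable def fD6 (m n : ℕ) : Rt := if m = n then Polynomial.X^(6*m) else 0
noncomputable def fOne (m n : ℕ) : Rt := if m = 0 ∧ n = 0 then 1 else 0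

lemma ser_fOne : ser fOne = (1 : PS) := by
  ext d : 1
  rw [coeff_ser, MvPowerSeries.coeff_one, fOne]
  by_cases h : d = 0
  · subst h; simp
  · rw [if_neg h, if_neg]
    rintro ⟨h0, h1⟩
    exact h (Finsupp.ext fun i => by fin_cases i <;> assumption)

lemma key1 (m n : ℕ) :
    fV1 m n - (if 1 ≤ n then (1:Rt) * fV1 m (n-1) else 0) = fDS m n := by
  simp only [fV1, fDS]
  split_ifs <;> first | (exfalso; omega) | ring

lemma key2 (m n : ℕ) :
    fDS m n - (if 1 ≤ m ∧ 1 ≤ n then (1:Rt) * fDS (m-1) (n-1) else 0) = fDm4 m n := by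
  simp only [fDS, fDm4]
  by_cases h : m = n
  · subst h
    cases m with
    | zero => norm_num [Sq_zero]
    | succ k =>
      rw [if_pos rfl, if_pos ⟨Nat.le_add_left 1 k, Nat.le_add_left 1 k⟩, Nat.add_sub_cancel,
        if_pos rfl, if_pos rfl, one_mul, Sq_succ]
      push_cast; ring
  · rw [if_neg h, if_neg h]
    split_ifs with h2 h3
    · exfalso; omega
    · ring
    · ring

lemma key3 (m n : ℕ) :
    fDm4 m n - (if 1 ≤ m ∧ 1 ≤ n then Polynomial.X^4 * fDm4 (m-1) (n-1) else 0) = fD4g m n := by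
  simp only [fDm4, fD4g]
  by_cases h : m = n
  · subst h
    cases m with
    | zero => norm_num
    | succ k =>
      rw [if_pos rfl, if_pos ⟨Nat.le_add_left 1 k, Nat.le_add_left 1 k⟩, Nat.add_sub_cancel,
        if_pos rfl, if_pos rfl]
      push_cast; ring
  · rw [if_neg h, if_neg h]
    split_ifs with h2 h3
    · exfalso; omega
    · ring
    · ring

lemma key4 (m n : ℕ) :
    fD4g m n - (if 1 ≤ m ∧ 1 ≤ n then Polynomial.X^4 * fD4g (m-1) (n-1) else 0) = fOne m n := by
  simp only [fD4g, fOne]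
  by_cases h : m = n
  · subst h
    cases m with
    | zero => norm_num
    | succ k =>
      rw [if_pos rfl, if_pos ⟨Nat.le_add_left 1 k, Nat.le_add_left 1 k⟩, Nat.add_sub_cancel,
        if_pos rfl, if_neg (by omega)]
      ring
  · rw [if_neg h, if_neg (show ¬(m = 0 ∧ n = 0) by omega)]
    split_ifs with h2 h3
    · exfalso; omega
    · ring
    · ring

lemma key10 (m n : ℕ) :
    fD6 m n - (if 1 ≤ m ∧ 1 ≤ n then Polynomial.X^6 * fD6 (m-1) (n-1) else 0) = fOne m n := by
  simp only [fD6, fOne]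
  by_cases h : m = n
  · subst h
    cases m with
    | zero => norm_num
    | succ k =>
      rw [if_pos rfl, if_pos ⟨Nat.le_add_left 1 k, Nat.le_add_left 1 k⟩, Nat.add_sub_cancel,
        if_pos rfl, if_neg (by omega)]
      ring
  · rw [if_neg h, if_neg (show ¬(m = 0 ∧ n = 0) by omega)]
    split_ifs with h2 h3
    · exfalso; omega
    · ring
    · ring

lemma key5 (m n : ℕ) :
    fV2 m n - (if 1 ≤ n then (1:Rt) * fV2 m (n-1) else 0) = fV2' m n := by
  simp only [fV2, fV2']
  by_cases hm : m ≤ n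
  · obtain ⟨j, rfl⟩ := Nat.exists_eq_add_of_le hm
    cases j with
    | zero =>
      simp only [Nat.add_zero, le_refl, if_true, Nat.sub_self, sg_zero]
      rcases Nat.eq_zero_or_pos m with rfl | hm1
      · norm_num
      · rw [if_pos (show 1 ≤ m by omega), if_neg (show ¬ m ≤ m - 1 by omega)]
        have e : 2*m+2*m = 4*m := by ring
        rw [e]; ring
    | succ t =>
      rw [if_pos (show m ≤ m + (t+1) by omega), if_pos (show 1 ≤ m + (t+1) by omega),
        if_pos (show m ≤ m + (t+1) - 1 by omega), if_pos (show m ≤ m + (t+1) by omega)]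
      have e1 : m + (t+1) - m = t + 1 := by omega
      have e2 : m + (t+1) - 1 - m = t := by omega
      rw [e1, e2, sg_succ]
      have e3 : 2*m+2*(m+(t+1)) = 4*m + 2*(t+1) := by ring
      rw [e3, pow_add]; ring
  · rw [if_neg hm, if_neg hm]
    split_ifs with h1 h2
    · exfalso; omega
    · ring
    · ring

lemma key6 (m n : ℕ) :
    fV2' m n - (if 1 ≤ n then Polynomial.X^2 * fV2' m (n-1) else 0) = fDm4 m n := by
  simp only [fV2', fDm4]
  by_cases hm : m ≤ n
  · obtain ⟨j, rfl⟩ := Nat.exists_eq_add_of_le hm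
    cases j with
    | zero =>
      simp only [Nat.add_zero, le_refl, eq_self_iff_true, if_true]
      rcases Nat.eq_zero_or_pos m with rfl | hm1
      · norm_num
      · rw [if_pos (show 1 ≤ m by omega), if_neg (show ¬ m ≤ m - 1 by omega)]
        have e : 2*m+2*m = 4*m := by ring
        rw [e]; ring
    | succ t =>
      rw [if_pos (by omega), if_pos (by omega), if_pos (by omega),
        if_neg (show ¬ m = m + (t+1) by omega)]
      have e : m + (t+1) - 1 = m + t := by omega
      rw [e]
      have e2 : 2*m+2*(m+(t+1)) = (2*m+2*(m+t)) + 2 := by ring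
      rw [e2, pow_add]; ring
  · rw [if_neg hm, if_neg (show ¬ m = n by omega)]
    split_ifs with h1 h2
    · exfalso; omega
    · ring
    · ring

lemma key7 (m n : ℕ) :
    fV3 m n - (if 1 ≤ n then Polynomial.X^2 * fV3 m (n-1) else 0) = fDR m n := by
  simp only [fV3, fDR]
  by_cases hm : m ≤ n
  · obtain ⟨j, rfl⟩ := Nat.exists_eq_add_of_le hm
    cases j with
    | zero =>
      simp only [Nat.add_zero, le_refl, eq_self_iff_true, if_true]
      rcases Nat.eq_zero_or_pos m with rfl | hm1
      · norm_num
      · rw [if_pos (show 1 ≤ m by omega), if_neg (show ¬ m ≤ m - 1 by omega)]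
        have e : 2*m+2*m = 4*m := by ring
        rw [e]; ring
    | succ t =>
      rw [if_pos (by omega), if_pos (by omega), if_pos (by omega),
        if_neg (show ¬ m = m + (t+1) by omega)]
      have e : m + (t+1) - 1 = m + t := by omega
      rw [e]
      have e2 : 2*m+2*(m+(t+1)) = (2*m+2*(m+t)) + 2 := by ring
      rw [e2, pow_add]; ring
  · rw [if_neg hm, if_neg (show ¬ m = n by omega)]
    split_ifs with h1 h2
    · exfalso; omega
    · ring
    · ring

lemma key8 (m n : ℕ) :
    fDR m n - (if 1 ≤ m ∧ 1 ≤ n then Polynomial.X^6 * fDR (m-1) (n-1) else 0) = fDm4 m n := by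
  simp only [fDR, fDm4]
  by_cases h : m = n
  · subst h
    cases m with
    | zero => norm_num [Rr_zero]
    | succ k =>
      rw [if_pos rfl, if_pos ⟨Nat.le_add_left 1 k, Nat.le_add_left 1 k⟩, Nat.add_sub_cancel,
        if_pos rfl, if_pos rfl, Rr_succ]
      push_cast; ring
  · rw [if_neg h, if_neg h]
    split_ifs with h2 h3
    · exfalso; omega
    · ring
    · ring

lemma key9 (m n : ℕ) :
    fV4 m n - (if 1 ≤ n then Polynomial.X^2 * fV4 m (n-1) else 0) = fD6 m n := by
  simp only [fV4, fD6]
  by_cases hm : m ≤ n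
  · obtain ⟨j, rfl⟩ := Nat.exists_eq_add_of_le hm
    cases j with
    | zero =>
      simp only [Nat.add_zero, le_refl, eq_self_iff_true, if_true]
      rcases Nat.eq_zero_or_pos m with rfl | hm1
      · norm_num
      · rw [if_pos (show 1 ≤ m by omega), if_neg (show ¬ m ≤ m - 1 by omega)]
        have e : 4*m+2*m = 6*m := by ring
        rw [e]; ring
    | succ t =>
      rw [if_pos (by omega), if_pos (by omega), if_pos (by omega),
        if_neg (show ¬ m = m + (t+1) by omega)]
      have e : m + (t+1) - 1 = m + t := by omega
      rw [e]
      have e2 : 4*m+2*(m+(t+1)) = (4*m+2*(m+t)) + 2 := by ring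
      rw [e2, pow_add]; ring
  · rw [if_neg hm, if_neg (show ¬ m = n by omega)]
    split_ifs with h1 h2
    · exfalso; omega
    · ring
    · ring

def serT (F : ℕ → ℕ → Rt) : PS := ser (fun m n => F n m)

lemma const_ser (F : ℕ → ℕ → Rt) :
    MvPowerSeries.constantCoeff (ser F) = F 0 0 := by
  rw [← MvPowerSeries.coeff_zero_eq_constantCoeff_apply, coeff_ser]
  simp

lemma inv_eq (φ ψ : PS) (h : φ * ψ = 1)
    (hψ : MvPowerSeries.constantCoeff ψ = 1) :
    MvPowerSeries.invOfUnit φ 1 = ψ := by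
  have hφ : MvPowerSeries.constantCoeff φ = 1 := by
    have h2 := congrArg (MvPowerSeries.constantCoeff) h
    rw [map_mul, hψ, mul_one, map_one] at h2
    exact h2
  have h2 : φ * MvPowerSeries.invOfUnit φ 1 = 1 :=
    MvPowerSeries.mul_invOfUnit φ 1 (by rw [hφ]; rfl)
  calc MvPowerSeries.invOfUnit φ 1 = MvPowerSeries.invOfUnit φ 1 * (φ * ψ) := by rw [h, mul_one]
  _ = (φ * MvPowerSeries.invOfUnit φ 1) * ψ := by ring
  _ = ψ := by rw [h2, one_mul]

lemma mon_mul (a b a' b' : ℕ) (c c' : Rt) :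
    mon a b c * mon a' b' c' = mon (a+a') (b+b') (c*c') := by
  rw [mon, mon, mon, MvPowerSeries.monomial_mul_monomial]
  congr 1
  rw [Finsupp.single_add, Finsupp.single_add]
  abel_nf

lemma X0_eq : (MvPowerSeries.X 0 : PS) = mon 1 0 1 := by
  rw [MvPowerSeries.X_def, mon]
  congr 1
  simp

lemma X1_eq : (MvPowerSeries.X 1 : PS) = mon 0 1 1 := by
  rw [MvPowerSeries.X_def, mon]
  congr 1
  simp

lemma gl3C_eq (c : Rt) : gl3C c = mon 0 0 c := by
  rw [gl3C, mon, ← MvPowerSeries.monomial_zero_eq_C_apply]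
  congr 1
  simp

lemma three_eq : (3 : PS) = mon 0 0 3 := by
  rw [← gl3C_eq]
  exact (map_ofNat (MvPowerSeries.C (σ := Fin 2) (R := Rt)) 3).symm

lemma four_eq : (4 : PS) = mon 0 0 4 := by
  rw [← gl3C_eq]
  exact (map_ofNat (MvPowerSeries.C (σ := Fin 2) (R := Rt)) 4).symm

lemma X0X1 : (MvPowerSeries.X 0 : PS) * MvPowerSeries.X 1 = mon 1 1 1 := by
  rw [X0_eq, X1_eq, mon_mul]; norm_num

lemma X1X0 : (MvPowerSeries.X 1 : PS) * MvPowerSeries.X 0 = mon 1 1 1 := by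
  rw [X0_eq, X1_eq, mon_mul]; norm_num

lemma CX0X1 (c : Rt) : gl3C c * MvPowerSeries.X 0 * MvPowerSeries.X 1 = mon 1 1 c := by
  rw [gl3C_eq, X0_eq, X1_eq, mon_mul, mon_mul]; norm_num

lemma CX1X0 (c : Rt) : gl3C c * MvPowerSeries.X 1 * MvPowerSeries.X 0 = mon 1 1 c := by
  rw [gl3C_eq, X0_eq, X1_eq, mon_mul, mon_mul]; norm_num

lemma CX1 (c : Rt) : gl3C c * MvPowerSeries.X 1 = mon 0 1 c := by
  rw [gl3C_eq, X1_eq, mon_mul]; norm_num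

lemma CX0 (c : Rt) : gl3C c * MvPowerSeries.X 0 = mon 1 0 c := by
  rw [gl3C_eq, X0_eq, mon_mul]; norm_num

lemma CX0X1sq (c : Rt) : gl3C c * MvPowerSeries.X 0 * (MvPowerSeries.X 1)^2 = mon 1 2 c := by
  rw [gl3C_eq, X0_eq, X1_eq, sq, mon_mul, mon_mul, mon_mul]; norm_num

lemma CX1X0sq (c : Rt) : gl3C c * MvPowerSeries.X 1 * (MvPowerSeries.X 0)^2 = mon 2 1 c := by
  rw [gl3C_eq, X0_eq, X1_eq, sq, mon_mul, mon_mul, mon_mul]; norm_num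

-- step instances, orientation 1
lemma sB1 : (1 - mon 0 1 1) * ser fV1 = ser fDS := stepB _ _ _ key1
lemma sAB1 : (1 - mon 1 1 1) * ser fDS = ser fDm4 := stepAB _ _ _ key2
lemma sAB4 : (1 - mon 1 1 (Polynomial.X^4)) * ser fDm4 = ser fD4g := stepAB _ _ _ key3
lemma sAB4' : (1 - mon 1 1 (Polynomial.X^4)) * ser fD4g = 1 := (stepAB _ _ _ key4).trans ser_fOne
lemma sB2 : (1 - mon 0 1 1) * ser fV2 = ser fV2' := stepB _ _ _ key5
lemma sB2' : (1 - mon 0 1 (Polynomial.X^2)) * ser fV2' = ser fDm4 := stepB _ _ _ key6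
lemma sB3 : (1 - mon 0 1 (Polynomial.X^2)) * ser fV3 = ser fDR := stepB _ _ _ key7
lemma sAB6 : (1 - mon 1 1 (Polynomial.X^6)) * ser fDR = ser fDm4 := stepAB _ _ _ key8
lemma sB4 : (1 - mon 0 1 (Polynomial.X^2)) * ser fV4 = ser fD6 := stepB _ _ _ key9
lemma sAB6' : (1 - mon 1 1 (Polynomial.X^6)) * ser fD6 = 1 := (stepAB _ _ _ key10).trans ser_fOne

-- transposed keys
lemma fOneT : (fun m n => fOne n m) = fOne := by
  funext m n
  simp only [fOne]
  exact if_congr and_comm rfl rfl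

lemma key2T (m n : ℕ) :
    fDS n m - (if 1 ≤ m ∧ 1 ≤ n then (1:Rt) * fDS (n-1) (m-1) else 0) = fDm4 n m := by
  rw [if_congr (and_comm) rfl rfl]; exact key2 n m

lemma key3T (m n : ℕ) :
    fDm4 n m - (if 1 ≤ m ∧ 1 ≤ n then Polynomial.X^4 * fDm4 (n-1) (m-1) else 0) = fD4g n m := by
  rw [if_congr (and_comm) rfl rfl]; exact key3 n m

lemma key4T (m n : ℕ) :
    fD4g n m - (if 1 ≤ m ∧ 1 ≤ n then Polynomial.X^4 * fD4g (n-1) (m-1) else 0) = fOne n m := by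
  rw [if_congr (and_comm) rfl rfl]; exact key4 n m

lemma key8T (m n : ℕ) :
    fDR n m - (if 1 ≤ m ∧ 1 ≤ n then Polynomial.X^6 * fDR (n-1) (m-1) else 0) = fDm4 n m := by
  rw [if_congr (and_comm) rfl rfl]; exact key8 n m

lemma key10T (m n : ℕ) :
    fD6 n m - (if 1 ≤ m ∧ 1 ≤ n then Polynomial.X^6 * fD6 (n-1) (m-1) else 0) = fOne n m := by
  rw [if_congr (and_comm) rfl rfl]; exact key10 n m

-- step instances, orientation 2 (transposed)
lemma tA1 : (1 - mon 1 0 1) * ser (fun m n => fV1 n m) = ser (fun m n => fDS n m) :=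
  stepA _ _ _ (fun m n => key1 n m)
lemma tAB1 : (1 - mon 1 1 1) * ser (fun m n => fDS n m) = ser (fun m n => fDm4 n m) :=
  stepAB _ _ _ key2T
lemma tAB4 : (1 - mon 1 1 (Polynomial.X^4)) * ser (fun m n => fDm4 n m)
    = ser (fun m n => fD4g n m) := stepAB _ _ _ key3T
lemma tAB4' : (1 - mon 1 1 (Polynomial.X^4)) * ser (fun m n => fD4g n m) = 1 :=
  (stepAB _ _ _ key4T).trans (by rw [fOneT]; exact ser_fOne)
lemma tA2 : (1 - mon 1 0 1) * ser (fun m n => fV2 n m) = ser (fun m n => fV2' n m) :=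
  stepA _ _ _ (fun m n => key5 n m)
lemma tA2' : (1 - mon 1 0 (Polynomial.X^2)) * ser (fun m n => fV2' n m)
    = ser (fun m n => fDm4 n m) := stepA _ _ _ (fun m n => key6 n m)
lemma tA3 : (1 - mon 1 0 (Polynomial.X^2)) * ser (fun m n => fV3 n m)
    = ser (fun m n => fDR n m) := stepA _ _ _ (fun m n => key7 n m)
lemma tAB6 : (1 - mon 1 1 (Polynomial.X^6)) * ser (fun m n => fDR n m)
    = ser (fun m n => fDm4 n m) := stepAB _ _ _ key8T
lemma tA4 : (1 - mon 1 0 (Polynomial.X^2)) * ser (fun m n => fV4 n m)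
    = ser (fun m n => fD6 n m) := stepA _ _ _ (fun m n => key9 n m)
lemma tAB6' : (1 - mon 1 1 (Polynomial.X^6)) * ser (fun m n => fD6 n m) = 1 :=
  (stepAB _ _ _ key10T).trans (by rw [fOneT]; exact ser_fOne)

-- inverses, orientation 1
lemma invD1 : MvPowerSeries.invOfUnit
    ((1 - MvPowerSeries.X 1) * (1 - MvPowerSeries.X 0 * MvPowerSeries.X 1) *
      (1 - gl3C (Polynomial.X ^ 4) * MvPowerSeries.X 0 * MvPowerSeries.X 1) ^ 2) 1
    = ser fV1 := by
  apply inv_eq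
  · rw [CX0X1, X0X1, X1_eq]
    rw [show ((1 - mon 0 1 1) * (1 - mon 1 1 1) * (1 - mon 1 1 (Polynomial.X^4))^2) * ser fV1
        = (1 - mon 1 1 (Polynomial.X^4)) * ((1 - mon 1 1 (Polynomial.X^4)) *
          ((1 - mon 1 1 1) * ((1 - mon 0 1 1) * ser fV1))) from by ring]
    rw [sB1, sAB1, sAB4, sAB4']
  · rw [const_ser]; simp [fV1, Sq_zero]

lemma invD2 : MvPowerSeries.invOfUnit
    ((1 - MvPowerSeries.X 1) * (1 - gl3C (Polynomial.X ^ 2) * MvPowerSeries.X 1) *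
      (1 - gl3C (Polynomial.X ^ 4) * MvPowerSeries.X 0 * MvPowerSeries.X 1) ^ 2) 1
    = ser fV2 := by
  apply inv_eq
  · rw [CX0X1, CX1, X1_eq]
    rw [show ((1 - mon 0 1 1) * (1 - mon 0 1 (Polynomial.X^2)) *
          (1 - mon 1 1 (Polynomial.X^4))^2) * ser fV2
        = (1 - mon 1 1 (Polynomial.X^4)) * ((1 - mon 1 1 (Polynomial.X^4)) *
          ((1 - mon 0 1 (Polynomial.X^2)) * ((1 - mon 0 1 1) * ser fV2))) from by ring]
    rw [sB2, sB2', sAB4, sAB4']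
  · rw [const_ser]; simp [fV2, sg_zero]

lemma invD3 : MvPowerSeries.invOfUnit
    ((1 - gl3C (Polynomial.X ^ 2) * MvPowerSeries.X 1) *
      (1 - gl3C (Polynomial.X ^ 4) * MvPowerSeries.X 0 * MvPowerSeries.X 1) ^ 2 *
      (1 - gl3C (Polynomial.X ^ 6) * MvPowerSeries.X 0 * MvPowerSeries.X 1)) 1
    = ser fV3 := by
  apply inv_eq
  · rw [CX0X1, CX0X1, CX1]
    rw [show ((1 - mon 0 1 (Polynomial.X^2)) * (1 - mon 1 1 (Polynomial.X^4))^2 *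
          (1 - mon 1 1 (Polynomial.X^6))) * ser fV3
        = (1 - mon 1 1 (Polynomial.X^4)) * ((1 - mon 1 1 (Polynomial.X^4)) *
          ((1 - mon 1 1 (Polynomial.X^6)) * ((1 - mon 0 1 (Polynomial.X^2)) * ser fV3)))
        from by ring]
    rw [sB3, sAB6, sAB4, sAB4']
  · rw [const_ser]; simp [fV3, Rr_zero]

lemma invD4 : MvPowerSeries.invOfUnit
    ((1 - gl3C (Polynomial.X ^ 2) * MvPowerSeries.X 1) *
      (1 - gl3C (Polynomial.X ^ 6) * MvPowerSeries.X 0 * MvPowerSeries.X 1)) 1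
    = ser fV4 := by
  apply inv_eq
  · rw [CX0X1, CX1]
    rw [show ((1 - mon 0 1 (Polynomial.X^2)) * (1 - mon 1 1 (Polynomial.X^6))) * ser fV4
        = (1 - mon 1 1 (Polynomial.X^6)) * ((1 - mon 0 1 (Polynomial.X^2)) * ser fV4)
        from by ring]
    rw [sB4, sAB6']
  · rw [const_ser]; simp [fV4]

-- inverses, orientation 2
lemma invD1T : MvPowerSeries.invOfUnit
    ((1 - MvPowerSeries.X 0) * (1 - MvPowerSeries.X 1 * MvPowerSeries.X 0) *
      (1 - gl3C (Polynomial.X ^ 4) * MvPowerSeries.X 1 * MvPowerSeries.X 0) ^ 2) 1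
    = ser (fun m n => fV1 n m) := by
  apply inv_eq
  · rw [CX1X0, X1X0, X0_eq]
    rw [show ((1 - mon 1 0 1) * (1 - mon 1 1 1) * (1 - mon 1 1 (Polynomial.X^4))^2) *
          ser (fun m n => fV1 n m)
        = (1 - mon 1 1 (Polynomial.X^4)) * ((1 - mon 1 1 (Polynomial.X^4)) *
          ((1 - mon 1 1 1) * ((1 - mon 1 0 1) * ser (fun m n => fV1 n m)))) from by ring]
    rw [tA1, tAB1, tAB4, tAB4']
  · rw [const_ser]; simp [fV1, Sq_zero]

lemma invD2T : MvPowerSeries.invOfUnit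
    ((1 - MvPowerSeries.X 0) * (1 - gl3C (Polynomial.X ^ 2) * MvPowerSeries.X 0) *
      (1 - gl3C (Polynomial.X ^ 4) * MvPowerSeries.X 1 * MvPowerSeries.X 0) ^ 2) 1
    = ser (fun m n => fV2 n m) := by
  apply inv_eq
  · rw [CX1X0, CX0, X0_eq]
    rw [show ((1 - mon 1 0 1) * (1 - mon 1 0 (Polynomial.X^2)) *
          (1 - mon 1 1 (Polynomial.X^4))^2) * ser (fun m n => fV2 n m)
        = (1 - mon 1 1 (Polynomial.X^4)) * ((1 - mon 1 1 (Polynomial.X^4)) *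
          ((1 - mon 1 0 (Polynomial.X^2)) * ((1 - mon 1 0 1) * ser (fun m n => fV2 n m))))
        from by ring]
    rw [tA2, tA2', tAB4, tAB4']
  · rw [const_ser]; simp [fV2, sg_zero]

lemma invD3T : MvPowerSeries.invOfUnit
    ((1 - gl3C (Polynomial.X ^ 2) * MvPowerSeries.X 0) *
      (1 - gl3C (Polynomial.X ^ 4) * MvPowerSeries.X 1 * MvPowerSeries.X 0) ^ 2 *
      (1 - gl3C (Polynomial.X ^ 6) * MvPowerSeries.X 1 * MvPowerSeries.X 0)) 1
    = ser (fun m n => fV3 n m) := by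
  apply inv_eq
  · rw [CX1X0, CX1X0, CX0]
    rw [show ((1 - mon 1 0 (Polynomial.X^2)) * (1 - mon 1 1 (Polynomial.X^4))^2 *
          (1 - mon 1 1 (Polynomial.X^6))) * ser (fun m n => fV3 n m)
        = (1 - mon 1 1 (Polynomial.X^4)) * ((1 - mon 1 1 (Polynomial.X^4)) *
          ((1 - mon 1 1 (Polynomial.X^6)) *
            ((1 - mon 1 0 (Polynomial.X^2)) * ser (fun m n => fV3 n m)))) from by ring]
    rw [tA3, tAB6, tAB4, tAB4']
  · rw [const_ser]; simp [fV3, Rr_zero]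

lemma invD4T : MvPowerSeries.invOfUnit
    ((1 - gl3C (Polynomial.X ^ 2) * MvPowerSeries.X 0) *
      (1 - gl3C (Polynomial.X ^ 6) * MvPowerSeries.X 1 * MvPowerSeries.X 0)) 1
    = ser (fun m n => fV4 n m) := by
  apply inv_eq
  · rw [CX1X0, CX0]
    rw [show ((1 - mon 1 0 (Polynomial.X^2)) * (1 - mon 1 1 (Polynomial.X^6))) *
          ser (fun m n => fV4 n m)
        = (1 - mon 1 1 (Polynomial.X^6)) *
            ((1 - mon 1 0 (Polynomial.X^2)) * ser (fun m n => fV4 n m)) from by ring]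
    rw [tA4, tAB6']
  · rw [const_ser]; simp [fV4]

-- inverses for g
lemma invE1 : MvPowerSeries.invOfUnit
    ((1 - MvPowerSeries.X 0 * MvPowerSeries.X 1) *
      (1 - gl3C (Polynomial.X ^ 4) * MvPowerSeries.X 0 * MvPowerSeries.X 1) ^ 2) 1
    = ser fDS := by
  apply inv_eq
  · rw [CX0X1, X0X1]
    rw [show ((1 - mon 1 1 1) * (1 - mon 1 1 (Polynomial.X^4))^2) * ser fDS
        = (1 - mon 1 1 (Polynomial.X^4)) * ((1 - mon 1 1 (Polynomial.X^4)) *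
          ((1 - mon 1 1 1) * ser fDS)) from by ring]
    rw [sAB1, sAB4, sAB4']
  · rw [const_ser]; simp [fDS, Sq_zero]

lemma invE2 : MvPowerSeries.invOfUnit
    ((1 - gl3C (Polynomial.X ^ 4) * MvPowerSeries.X 0 * MvPowerSeries.X 1) ^ 2 *
      (1 - gl3C (Polynomial.X ^ 6) * MvPowerSeries.X 0 * MvPowerSeries.X 1)) 1
    = ser fDR := by
  apply inv_eq
  · rw [CX0X1, CX0X1]
    rw [show ((1 - mon 1 1 (Polynomial.X^4))^2 * (1 - mon 1 1 (Polynomial.X^6))) * ser fDR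
        = (1 - mon 1 1 (Polynomial.X^4)) * ((1 - mon 1 1 (Polynomial.X^4)) *
          ((1 - mon 1 1 (Polynomial.X^6)) * ser fDR)) from by ring]
    rw [sAB6, sAB4, sAB4']
  · rw [const_ser]; simp [fDR, Rr_zero]

lemma invE3 : MvPowerSeries.invOfUnit
    (1 - gl3C (Polynomial.X ^ 6) * MvPowerSeries.X 0 * MvPowerSeries.X 1) 1
    = ser fD6 := by
  apply inv_eq
  · rw [CX0X1, sAB6']
  · rw [const_ser]; simp [fD6]

noncomputable def Efun (m n : ℕ) : Rt :=
  (if 1 ≤ m ∧ 1 ≤ n then (Polynomial.X^2+1) * fV1 (m-1) (n-1) else 0)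
  + ((if 1 ≤ m ∧ 2 ≤ n then (Polynomial.X^4*3) * fV2 (m-1) (n-2) else 0)
    - (if 2 ≤ m ∧ 3 ≤ n then (Polynomial.X^4*Polynomial.X^4) * fV2 (m-2) (n-3) else 0))
  + (if 1 ≤ m ∧ 1 ≤ n then ((4:Rt)*Polynomial.X^4) * fV3 (m-1) (n-1) else 0)
  + (if 1 ≤ m ∧ 1 ≤ n then Polynomial.X^6 * fV4 (m-1) (n-1) else 0)

noncomputable def E2fun (m n : ℕ) : Rt :=
  (if 1 ≤ m ∧ 1 ≤ n then (Polynomial.X^2+1) * fV1 (n-1) (m-1) else 0)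
  + ((if 2 ≤ m ∧ 1 ≤ n then (Polynomial.X^4*3) * fV2 (n-1) (m-2) else 0)
    - (if 3 ≤ m ∧ 2 ≤ n then (Polynomial.X^4*Polynomial.X^4) * fV2 (n-2) (m-3) else 0))
  + (if 1 ≤ m ∧ 1 ≤ n then ((4:Rt)*Polynomial.X^4) * fV3 (n-1) (m-1) else 0)
  + (if 1 ≤ m ∧ 1 ≤ n then Polynomial.X^6 * fV4 (n-1) (m-1) else 0)

noncomputable def Gfun (m n : ℕ) : Rt :=
  (if 1 ≤ m ∧ 1 ≤ n then (Polynomial.X^2+1) * fDS (m-1) (n-1) else 0)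
  + (if 1 ≤ m ∧ 1 ≤ n then ((4:Rt)*Polynomial.X^4) * fDR (m-1) (n-1) else 0)
  + (if 1 ≤ m ∧ 1 ≤ n then Polynomial.X^6 * fD6 (m-1) (n-1) else 0)

lemma gl3F_eq1 : gl3F (MvPowerSeries.X 0) (MvPowerSeries.X 1)
    = mon 1 1 (Polynomial.X^2+1) * ser fV1
    + (mon 1 2 (Polynomial.X^4*3) - mon 2 3 (Polynomial.X^4*Polynomial.X^4)) * ser fV2
    + mon 1 1 ((4:Rt)*Polynomial.X^4) * ser fV3
    + mon 1 1 (Polynomial.X^6) * ser fV4 := by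
  rw [gl3F, invD1, invD2, invD3, invD4]
  rw [CX0X1 (Polynomial.X^2+1), CX0X1 (Polynomial.X^4), CX0X1 (Polynomial.X^6),
    CX0X1sq (Polynomial.X^4)]
  rw [three_eq, four_eq, mul_sub, mon_mul, mon_mul]
  rw [show mon 0 0 (4:Rt) * mon 1 1 (Polynomial.X^4) = mon 1 1 ((4:Rt)*Polynomial.X^4)
      from by rw [mon_mul]]

lemma gl3F_eq2 : gl3F (MvPowerSeries.X 1) (MvPowerSeries.X 0)
    = mon 1 1 (Polynomial.X^2+1) * ser (fun m n => fV1 n m)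
    + (mon 2 1 (Polynomial.X^4*3) - mon 3 2 (Polynomial.X^4*Polynomial.X^4))
        * ser (fun m n => fV2 n m)
    + mon 1 1 ((4:Rt)*Polynomial.X^4) * ser (fun m n => fV3 n m)
    + mon 1 1 (Polynomial.X^6) * ser (fun m n => fV4 n m) := by
  rw [gl3F, invD1T, invD2T, invD3T, invD4T]
  rw [CX1X0 (Polynomial.X^2+1), CX1X0 (Polynomial.X^4), CX1X0 (Polynomial.X^6),
    CX1X0sq (Polynomial.X^4)]
  rw [three_eq, four_eq, mul_sub, mon_mul, mon_mul]
  rw [show mon 0 0 (4:Rt) * mon 1 1 (Polynomial.X^4) = mon 1 1 ((4:Rt)*Polynomial.X^4)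
      from by rw [mon_mul]]

lemma gl3G_eq : gl3G (MvPowerSeries.X 0) (MvPowerSeries.X 1)
    = mon 1 1 (Polynomial.X^2+1) * ser fDS
    + mon 1 1 ((4:Rt)*Polynomial.X^4) * ser fDR
    + mon 1 1 (Polynomial.X^6) * ser fD6 := by
  rw [gl3G, invE1, invE2, invE3]
  rw [CX0X1 (Polynomial.X^2+1), CX0X1 (Polynomial.X^4), CX0X1 (Polynomial.X^6)]
  rw [four_eq]
  rw [show mon 0 0 (4:Rt) * mon 1 1 (Polynomial.X^4) = mon 1 1 ((4:Rt)*Polynomial.X^4)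
      from by rw [mon_mul]]

lemma coeffF1 (d : Fin 2 →₀ ℕ) :
    MvPowerSeries.coeff d (gl3F (MvPowerSeries.X 0) (MvPowerSeries.X 1))
      = Efun (d 0) (d 1) := by
  rw [gl3F_eq1, sub_mul]
  simp only [map_add, map_sub, coeff_mon_mul_ser, Efun]

lemma coeffF2 (d : Fin 2 →₀ ℕ) :
    MvPowerSeries.coeff d (gl3F (MvPowerSeries.X 1) (MvPowerSeries.X 0))
      = E2fun (d 0) (d 1) := by
  rw [gl3F_eq2, sub_mul]
  simp only [map_add, map_sub, coeff_mon_mul_ser, E2fun]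

lemma coeffG (d : Fin 2 →₀ ℕ) :
    MvPowerSeries.coeff d (gl3G (MvPowerSeries.X 0) (MvPowerSeries.X 1))
      = Gfun (d 0) (d 1) := by
  rw [gl3G_eq]
  simp only [map_add, coeff_mon_mul_ser, Gfun]

lemma ifand (p q : Prop) [Decidable p] [Decidable q] (x : Rt) :
    (if p ∧ q then x else 0) = if q ∧ p then x else 0 := by
  by_cases hp : p <;> by_cases hq : q <;> simp [hp, hq]

lemma E2fun_eq (m n : ℕ) : E2fun m n = Efun n m := by
  simp only [Efun, E2fun]
  rw [ifand (1 ≤ m) (1 ≤ n), ifand (2 ≤ m) (1 ≤ n), ifand (3 ≤ m) (2 ≤ n),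
    ifand (1 ≤ m) (1 ≤ n), ifand (1 ≤ m) (1 ≤ n)]

lemma sumIcc (a r : ℕ) :
    (∑ i ∈ Icc a (a+r), (Polynomial.X : Rt)^(2*i)) = Polynomial.X^(2*a) * sg r := by
  rw [← Finset.Ico_add_one_right_eq_Icc, Finset.sum_Ico_eq_sum_range]
  have e : a + r + 1 - a = r + 1 := by omega
  rw [e, sg, Finset.mul_sum]
  refine Finset.sum_congr rfl fun i _ => ?_
  rw [← pow_add]
  congr 1
  ring

lemma P1 (m : ℕ) (hm : 1 ≤ m) :
    (Polynomial.X^2+1) * Sq (m-1)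
      = ∑ i ∈ Icc 1 m, (i : Rt) * (Polynomial.X^(4*i-2)+Polynomial.X^(4*i-4)) := by
  obtain ⟨k, rfl⟩ := Nat.exists_eq_add_of_le hm
  rw [← Finset.Ico_add_one_right_eq_Icc, Finset.sum_Ico_eq_sum_range]
  have e : 1 + k + 1 - 1 = k + 1 := by omega
  have e2 : 1 + k - 1 = k := by omega
  rw [e, e2, Sq, Finset.mul_sum]
  refine Finset.sum_congr rfl fun j _ => ?_
  have e3 : 4*(1+j) - 2 = 4*j + 2 := by omega
  have e4 : 4*(1+j) - 4 = 4*j := by omega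
  rw [e3, e4]
  push_cast
  ring

lemma P2 (m n : ℕ) (hm : 1 ≤ m) (hmn : m ≤ n) :
    (if 1 ≤ m ∧ 2 ≤ n then (Polynomial.X^4*3) * fV2 (m-1) (n-2) else 0)
      - (if 2 ≤ m ∧ 3 ≤ n then (Polynomial.X^4*Polynomial.X^4) * fV2 (m-2) (n-3) else 0)
      = ∑ i ∈ Icc (2*m) (m+n-1), ((2*m+1 : ℕ) : Rt) * Polynomial.X^(2*i) := by
  rcases eq_or_lt_of_le hmn with rfl | hlt
  · rw [Finset.Icc_eq_empty (show ¬ 2*m ≤ m+m-1 from by omega), Finset.sum_empty]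
    simp only [fV2]
    split_ifs <;> first | (exfalso; omega) | ring
  · have h2 : 2 ≤ n := by omega
    rw [if_pos ⟨hm, h2⟩]
    rw [show m+n-1 = 2*m + (n-m-1) from by omega, ← Finset.mul_sum, sumIcc]
    rcases Nat.lt_or_ge m 2 with hm2 | hm2
    · obtain rfl : m = 1 := by omega
      rw [if_neg (show ¬(2 ≤ 1 ∧ 3 ≤ n) from by omega)]
      simp only [fV2]
      rw [if_pos (show 1-1 ≤ n-2 from by omega)]
      have e1 : n-2-(1-1) = n-1-1 := by omega
      rw [e1]
      push_cast
      ring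
    · have h3 : 3 ≤ n := by omega
      rw [if_pos ⟨hm2, h3⟩]
      simp only [fV2]
      rw [if_pos (show m-1 ≤ n-2 from by omega), if_pos (show m-2 ≤ n-3 from by omega)]
      have e1 : n-2-(m-1) = n-m-1 := by omega
      have e2 : n-3-(m-2) = n-m-1 := by omega
      rw [e1, e2]
      obtain ⟨k, rfl⟩ := Nat.exists_eq_add_of_le hm2
      have e3 : 2+k-1 = k+1 := by omega
      have e4 : 2+k-2 = k := by omega
      rw [e3, e4]
      push_cast
      ring

lemma P3 (m n : ℕ) (hm : 1 ≤ m) (hmn : m ≤ n) :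
    ((4:Rt)*Polynomial.X^4) * fV3 (m-1) (n-1)
      = ∑ i ∈ Icc (m+n) (2*m+n-1), ((4*(2*m+n-i) : ℕ) : Rt) * Polynomial.X^(2*i) := by
  have hn : 1 ≤ n := le_trans hm hmn
  obtain ⟨k, rfl⟩ := Nat.exists_eq_add_of_le hm
  obtain ⟨j, rfl⟩ := Nat.exists_eq_add_of_le hn
  simp only [fV3]
  rw [if_pos (show 1+k-1 ≤ 1+j-1 from by omega)]
  have ek : 1+k-1 = k := by omega
  have ej : 1+j-1 = j := by omega
  rw [ek, ej]
  rw [← Finset.Ico_add_one_right_eq_Icc, Finset.sum_Ico_eq_sum_range]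
  have e : 2*(1+k)+(1+j)-1+1 - ((1+k)+(1+j)) = k+1 := by omega
  rw [e, Rr, Finset.mul_sum, Finset.mul_sum]
  refine Finset.sum_congr rfl fun b hb => ?_
  rw [Finset.mem_range] at hb
  have e3 : 4*(2*(1+k)+(1+j)-((1+k)+(1+j)+b)) = 4*(k+1-b) := by omega
  rw [e3, Nat.cast_mul]
  rw [show 2*((1+k)+(1+j)+b) = (2*k+2*j) + 2*b + 4 from by ring, pow_add, pow_add]
  push_cast
  ring

lemma P4 (m n : ℕ) (hm : 1 ≤ m) (hmn : m ≤ n) :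
    Polynomial.X^6 * fV4 (m-1) (n-1) = (Polynomial.X : Rt)^(4*m+2*n) := by
  have hn : 1 ≤ n := le_trans hm hmn
  simp only [fV4]
  rw [if_pos (show m-1 ≤ n-1 from by omega), ← pow_add]
  congr 1
  omega

lemma Epart (m n : ℕ) (hm : 1 ≤ m) (hmn : m ≤ n) : Efun m n = gl3PoincarePoly m n := by
  have hn : 1 ≤ n := le_trans hm hmn
  have h1 : (Polynomial.X^2+1) * fV1 (m-1) (n-1)
      = ∑ i ∈ Icc 1 m, (i : Rt) * (Polynomial.X^(4*i-2)+Polynomial.X^(4*i-4)) := by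
    simp only [fV1]
    rw [if_pos (show m-1 ≤ n-1 from by omega)]
    exact P1 m hm
  rw [Efun, gl3PoincarePoly, h1, P2 m n hm hmn, P3 m n hm hmn, P4 m n hm hmn,
    if_pos ⟨hm, hn⟩, if_pos ⟨hm, hn⟩, if_pos ⟨hm, hn⟩]

lemma Ezero (m n : ℕ) (h : ¬(1 ≤ m ∧ 1 ≤ n ∧ m ≤ n)) : Efun m n = 0 := by
  simp only [Efun, fV1, fV2, fV3, fV4]
  split_ifs <;> first | (exfalso; omega) | ring

lemma Gzero (m n : ℕ) (h : ¬(1 ≤ m ∧ m = n)) : Gfun m n = 0 := by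
  simp only [Gfun, fDS, fDR, fD6]
  split_ifs <;> first | (exfalso; omega) | ring

lemma Gpart (m : ℕ) (hm : 1 ≤ m) : Gfun m m = gl3PoincarePoly m m := by
  have h1 : (Polynomial.X^2+1) * fDS (m-1) (m-1)
      = ∑ i ∈ Icc 1 m, (i : Rt) * (Polynomial.X^(4*i-2)+Polynomial.X^(4*i-4)) := by
    have e : fDS (m-1) (m-1) = Sq (m-1) := by simp [fDS]
    rw [e]
    exact P1 m hm
  have h3 : ((4:Rt)*Polynomial.X^4) * fDR (m-1) (m-1)
      = ∑ i ∈ Icc (m+m) (2*m+m-1), ((4*(2*m+m-i) : ℕ) : Rt) * Polynomial.X^(2*i) := by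
    have e2 : fV3 (m-1) (m-1) = Polynomial.X^(4*(m-1)) * Rr (m-1) := by
      rw [show (4:ℕ)*(m-1) = 2*(m-1)+2*(m-1) from by ring]
      simp [fV3]
    have e1 : fDR (m-1) (m-1) = Polynomial.X^(4*(m-1)) * Rr (m-1) := by simp [fDR]
    rw [e1, ← e2]
    exact P3 m m hm le_rfl
  have h4 : Polynomial.X^6 * fD6 (m-1) (m-1) = (Polynomial.X : Rt)^(4*m+2*m) := by
    have e2 : fV4 (m-1) (m-1) = (Polynomial.X : Rt)^(6*(m-1)) := by
      rw [show (6:ℕ)*(m-1) = 4*(m-1)+2*(m-1) from by ring]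
      simp [fV4]
    have e1 : fD6 (m-1) (m-1) = (Polynomial.X : Rt)^(6*(m-1)) := by simp [fD6]
    rw [e1, ← e2]
    exact P4 m m hm le_rfl
  rw [Gfun, gl3PoincarePoly, if_pos ⟨hm, hm⟩, if_pos ⟨hm, hm⟩, if_pos ⟨hm, hm⟩, h1, h3, h4,
    Finset.Icc_eq_empty (show ¬ 2*m ≤ m+m-1 from by omega), Finset.sum_empty, add_zero]

lemma final (m n : ℕ) : Efun m n + Efun n m - Gfun m n
    = if 1 ≤ m ∧ 1 ≤ n then
        (if m ≤ n then gl3PoincarePoly m n else gl3PoincarePoly n m) else 0 := by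
  by_cases h : 1 ≤ m ∧ 1 ≤ n
  · rw [if_pos h]
    rcases lt_trichotomy m n with hlt | rfl | hgt
    · rw [if_pos hlt.le, Epart m n h.1 hlt.le, Ezero n m (by omega), Gzero m n (by omega)]
      ring
    · rw [if_pos le_rfl, Epart m m h.1 le_rfl, Gpart m h.1]
      ring
    · rw [if_neg (show ¬ m ≤ n from by omega), Epart n m h.2 hgt.le, Ezero m n (by omega),
        Gzero m n (by omega)]
      ring
  · rw [if_neg h, Ezero m n (by omega), Ezero n m (by omega), Gzero m n (by omega)]
    ring

/-- **Rationality conjecture for `GL₃`.**  With `P_{(n₁,n₂)} := P_{(n₂,n₁)}` for `n₁ > n₂`,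
one has in `ℤ[t][[T₁,T₂]]` the identity
`∑_{n₁ ≥ 1} ∑_{n₂ ≥ 1} P_{(n₁,n₂)}(t) T₁^{n₁} T₂^{n₂} = f(T₁,T₂) + f(T₂,T₁) − g(T₁,T₂)`,
stated coefficientwise; in particular the double generating series is a rational function. -/
theorem gl3_rationality :
    ∀ n₁ n₂ : ℕ,
      MvPowerSeries.coeff (σ := Fin 2) (R := Polynomial ℤ) (Finsupp.single 0 n₁ + Finsupp.single 1 n₂)
        (gl3F (MvPowerSeries.X 0) (MvPowerSeries.X 1)
          + gl3F (MvPowerSeries.X 1) (MvPowerSeries.X 0)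
          - gl3G (MvPowerSeries.X 0) (MvPowerSeries.X 1))
      = if 1 ≤ n₁ ∧ 1 ≤ n₂ then
          (if n₁ ≤ n₂ then gl3PoincarePoly n₁ n₂ else gl3PoincarePoly n₂ n₁)
        else 0 := by
  intro n₁ n₂
  rw [map_sub, map_add, coeffF1, coeffF2, coeffG, E2fun_eq, pair_apply0, pair_apply1]
  exact final n₁ n₂
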